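/- Let d ≥ 1, let Σ be a symmetric positive definite d×d real matrix, let γ ∈ ℝ^d with γ_k > 0 for each k, and let Γ = diag(γ_1²/4, …, γ_d²/4). Let μ, ω, ω' ∈ ℝ^d. Then ∫_{ℝ^d} exp(−∑_{k=1}^d ((w_k − ω_k)² + (w_k − ω'_k)²)/γ_k²) · p_{μ,Σ}(w) dw = det((Γ + Σ)·Γ⁻¹)^(−1/2) · exp(−(1/8)·(ω − ω')ᵀΓ⁻¹(ω − ω')) · exp(−(1/2)·((ω + ω')/2 − μ)ᵀ(Γ + Σ)⁻¹((ω + ω')/2 − μ)). -/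

import Mathlib

open MeasureTheory Real Matrix

/-- Multivariate normal density with mean `μ` and covariance matrix `S` on `Fin d → ℝ`. -/
noncomputable def mvnPDF {d : ℕ} (μ : Fin d → ℝ) (S : Matrix (Fin d) (Fin d) ℝ)
    (w : Fin d → ℝ) : ℝ :=
  (Real.sqrt ((2 * Real.pi) ^ d * S.det))⁻¹ *
    Real.exp (-(1 / 2) * ((w - μ) ⬝ᵥ (S⁻¹ *ᵥ (w - μ))))

lemma dotMulT {d : ℕ} (X : Matrix (Fin d) (Fin d) ℝ) (u v : Fin d → ℝ) :
    (X *ᵥ u) ⬝ᵥ v = u ⬝ᵥ Xᵀ *ᵥ v := by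
  rw [dotProduct_comm, Matrix.dotProduct_mulVec, ← Matrix.mulVec_transpose, dotProduct_comm]

lemma dsym {d : ℕ} (X : Matrix (Fin d) (Fin d) ℝ) (hX : Xᵀ = X) (u v : Fin d → ℝ) :
    u ⬝ᵥ X *ᵥ v = v ⬝ᵥ X *ᵥ u := by
  rw [← hX, ← dotMulT, dotProduct_comm, hX]

lemma posDef_add' {d : ℕ} {A B : Matrix (Fin d) (Fin d) ℝ} (hA : A.PosDef) (hB : B.PosDef) :
    (A + B).PosDef :=
  hA.add hB

lemma posSemidef_det_nonneg {d : ℕ} {P : Matrix (Fin d) (Fin d) ℝ} (hP : P.PosSemidef) :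
    0 ≤ P.det := by
  exact hP.det_nonneg

lemma hermT {d : ℕ} {X : Matrix (Fin d) (Fin d) ℝ} (h : X.IsHermitian) : Xᵀ = X := by
  have := h.eq; rwa [Matrix.conjTranspose_eq_transpose_of_trivial] at this

open scoped MatrixOrder in
lemma integral_exp_neg_half_quadratic {d : ℕ} (M : Matrix (Fin d) (Fin d) ℝ) (hM : M.PosDef) :
    ∫ x : Fin d → ℝ, Real.exp (-(1/2) * (x ⬝ᵥ M *ᵥ x)) = Real.sqrt ((2*π)^d / M.det) := by
  set R := CFC.sqrt M with hRdef
  have hRR : R * R = M := CFC.sqrt_mul_sqrt_self M hM.posSemidef.nonneg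
  have hRsymm : Rᵀ = R := hermT (CFC.sqrt_nonneg M).posSemidef.isHermitian
  have hdetM : 0 < M.det := hM.det_pos
  have hdetRR : R.det * R.det = M.det := by rw [← Matrix.det_mul, hRR]
  have hdetR_nonneg : 0 ≤ R.det := posSemidef_det_nonneg (CFC.sqrt_nonneg M).posSemidef
  have hdetR_pos : 0 < R.det := by
    rcases hdetR_nonneg.lt_or_eq with h | h
    · exact h
    · rw [← h] at hdetRR; nlinarith
  have hsqrtM : Real.sqrt M.det = R.det := by
    rw [← hdetRR, Real.sqrt_mul_self hdetR_nonneg]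
  have hpt : ∀ x : Fin d → ℝ, x ⬝ᵥ M *ᵥ x = ∑ i, ((R *ᵥ x) i)^2 := by
    intro x
    have h := dotMulT R x (R *ᵥ x)
    rw [hRsymm] at h
    rw [← hRR, ← Matrix.mulVec_mulVec, ← h]
    simp [dotProduct, sq]
  set L : (Fin d → ℝ) →ₗ[ℝ] (Fin d → ℝ) := Matrix.toLin' R with hLdef
  have hLdet : LinearMap.det L = R.det := LinearMap.det_toLin' R
  have hLx : ∀ x, L x = R *ᵥ x := fun x => Matrix.toLin'_apply R x
  have hmap : Measure.map L volume = ENNReal.ofReal (|(LinearMap.det L)⁻¹|) • volume :=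
    Real.map_linearMap_volume_pi_eq_smul_volume_pi (by rw [hLdet]; exact hdetR_pos.ne')
  set g : (Fin d → ℝ) → ℝ := fun y => Real.exp (-(1/2) * ∑ i, (y i)^2) with hgdef
  have hgcont : Continuous g := by fun_prop
  have hLcont : Continuous L := LinearMap.continuous_of_finiteDimensional L
  have hstep : ∫ x : Fin d → ℝ, Real.exp (-(1/2) * (x ⬝ᵥ M *ᵥ x)) = ∫ x, g (L x) := by
    congr 1; funext x; rw [hpt x, hLx]
  have hstep2 : ∫ x, g (L x) = (R.det)⁻¹ * ∫ y, g y := by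
    rw [← MeasureTheory.integral_map hLcont.aemeasurable hgcont.aestronglyMeasurable, hmap,
      MeasureTheory.integral_smul_measure]
    rw [hLdet, ENNReal.toReal_ofReal (abs_nonneg _), abs_of_pos (by positivity)]
    simp [smul_eq_mul]
  have hgauss1 : ∫ t : ℝ, Real.exp (-(1/2) * t^2) = Real.sqrt (2*π) := by
    have := integral_gaussian (1/2 : ℝ)
    simp only [neg_mul] at this ⊢
    rw [this]
    rw [mul_comm]
    norm_num
  have hstep3 : ∫ y, g y = Real.sqrt (2*π) ^ d := by
    have : ∀ y : Fin d → ℝ, g y = ∏ i, Real.exp (-(1/2) * (y i)^2) := by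
      intro y
      rw [hgdef]
      simp only [Finset.mul_sum, ← Real.exp_sum, neg_mul, Finset.sum_neg_distrib]
    simp_rw [this]
    rw [MeasureTheory.integral_fintype_prod_volume_eq_pow (fun t : ℝ => Real.exp (-(1/2) * t^2)),
      hgauss1]
    simp
  rw [hstep, hstep2, hstep3]
  have hsp : Real.sqrt ((2*π)^d) = Real.sqrt (2*π) ^ d := by
    rw [← Real.sqrt_sq (by positivity : (0:ℝ) ≤ Real.sqrt (2*π) ^ d)]
    congr 1
    rw [← pow_mul, mul_comm d 2, pow_mul, Real.sq_sqrt (by positivity)]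
  rw [Real.sqrt_div (by positivity) M.det, inv_mul_eq_div, hsqrtM, hsp]

lemma complete_square {d : ℕ} (A B : Matrix (Fin d) (Fin d) ℝ)
    (hA : Aᵀ = A) (hB : Bᵀ = B) (hM : IsUnit (A + B).det)
    (m μ w : Fin d → ℝ) :
    (w - m) ⬝ᵥ A *ᵥ (w - m) + (w - μ) ⬝ᵥ B *ᵥ (w - μ)
      = (w - (A + B)⁻¹ *ᵥ (A *ᵥ m + B *ᵥ μ)) ⬝ᵥ (A + B) *ᵥ (w - (A + B)⁻¹ *ᵥ (A *ᵥ m + B *ᵥ μ))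
        + (m - μ) ⬝ᵥ (A * (A + B)⁻¹ * B) *ᵥ (m - μ) := by
  set M := A + B with hMdef
  set K := A * M⁻¹ * B with hKdef
  set ν := M⁻¹ *ᵥ (A *ᵥ m + B *ᵥ μ) with hνdef
  have hMt : Mᵀ = M := by rw [hMdef, Matrix.transpose_add, hA, hB]
  have hiT : M⁻¹ᵀ = M⁻¹ := by rw [Matrix.transpose_nonsing_inv, hMt]
  have hMM : M * M⁻¹ = 1 := Matrix.mul_nonsing_inv _ hM
  have hMM' : M⁻¹ * M = 1 := Matrix.nonsing_inv_mul _ hM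
  have hAeq : A = M - B := by rw [hMdef]; abel
  have hMν : M *ᵥ ν = A *ᵥ m + B *ᵥ μ := by
    rw [hνdef, Matrix.mulVec_mulVec, hMM, Matrix.one_mulVec]
  have h4 : B * M⁻¹ * A = K := by
    rw [hKdef, hAeq, mul_sub, Matrix.sub_mul, Matrix.sub_mul, mul_assoc B M⁻¹ M, hMM', hMM,
      mul_one, one_mul]
  have h1 : A * M⁻¹ * A = A - K := by
    have : A * M⁻¹ * A + K = A := by
      rw [hKdef, ← mul_add, ← hMdef, mul_assoc, hMM', mul_one]
    linear_combination (norm := abel) this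
  have h2 : B * M⁻¹ * B = B - K := by
    have : K + B * M⁻¹ * B = B := by
      rw [← h4, ← mul_add, ← hMdef, mul_assoc, hMM', mul_one]
    linear_combination (norm := abel) this
  have g1 : m ⬝ᵥ A *ᵥ w = w ⬝ᵥ A *ᵥ m := dsym A hA m w
  have g2 : μ ⬝ᵥ B *ᵥ w = w ⬝ᵥ B *ᵥ μ := dsym B hB μ w
  have g3 : ν ⬝ᵥ M *ᵥ w = w ⬝ᵥ M *ᵥ ν := dsym M hMt ν w
  have g4 : w ⬝ᵥ M *ᵥ w = w ⬝ᵥ A *ᵥ w + w ⬝ᵥ B *ᵥ w := by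
    rw [hMdef, Matrix.add_mulVec, dotProduct_add]
  have g5 : w ⬝ᵥ M *ᵥ ν = w ⬝ᵥ A *ᵥ m + w ⬝ᵥ B *ᵥ μ := by
    rw [hMν, dotProduct_add]
  have g6 : ν ⬝ᵥ M *ᵥ ν = m ⬝ᵥ A *ᵥ m - m ⬝ᵥ K *ᵥ m + m ⬝ᵥ K *ᵥ μ + μ ⬝ᵥ K *ᵥ m
      + μ ⬝ᵥ B *ᵥ μ - μ ⬝ᵥ K *ᵥ μ := by
    rw [hMν, hνdef]
    simp only [dotProduct_add, add_dotProduct, dotMulT, Matrix.mulVec_mulVec, hiT, hA, hB,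
      ← mul_assoc, h1, h2, h4, Matrix.sub_mulVec, dotProduct_sub, sub_dotProduct]
    ring
  have g7 : (m - μ) ⬝ᵥ K *ᵥ (m - μ)
      = m ⬝ᵥ K *ᵥ m - m ⬝ᵥ K *ᵥ μ - μ ⬝ᵥ K *ᵥ m + μ ⬝ᵥ K *ᵥ μ := by
    rw [Matrix.mulVec_sub, dotProduct_sub, sub_dotProduct, sub_dotProduct]
    ring
  simp only [Matrix.mulVec_sub, dotProduct_sub, sub_dotProduct]
  linarith [g1, g2, g3, g4, g5, g6, g7]

set_option maxHeartbeats 1000000 in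
theorem integral_sqExpKernel_sq_mul_mvnPDF (d : ℕ) (hd : 1 ≤ d)
    (S : Matrix (Fin d) (Fin d) ℝ) (hS : S.PosDef)
    (γ : Fin d → ℝ) (hγ : ∀ k, 0 < γ k)
    (Γmat : Matrix (Fin d) (Fin d) ℝ) (hΓ : Γmat = Matrix.diagonal fun k => γ k ^ 2 / 4)
    (μ ω ω' : Fin d → ℝ) :
    ∫ w : Fin d → ℝ,
        Real.exp (-∑ k, ((w k - ω k) ^ 2 + (w k - ω' k) ^ 2) / γ k ^ 2) * mvnPDF μ S w =
      (Real.sqrt (((Γmat + S) * Γmat⁻¹).det))⁻¹ *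
        Real.exp (-(1 / 8) * ((ω - ω') ⬝ᵥ (Γmat⁻¹ *ᵥ (ω - ω')))) *
        Real.exp (-(1 / 2) *
          (((ω + ω') / 2 - μ) ⬝ᵥ ((Γmat + S)⁻¹ *ᵥ ((ω + ω') / 2 - μ)))) := by
  have hΓpd : Γmat.PosDef := by
    rw [hΓ]
    exact Matrix.PosDef.diagonal fun k => by have := (hγ k).ne'; positivity
  have hApd : Γmat⁻¹.PosDef := hΓpd.inv
  have hBpd : (S⁻¹).PosDef := hS.inv
  have hAt : (Γmat⁻¹)ᵀ = Γmat⁻¹ := hermT hApd.isHermitian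
  have hBt : (S⁻¹)ᵀ = S⁻¹ := hermT hBpd.isHermitian
  have hMpd : (Γmat⁻¹ + S⁻¹).PosDef := posDef_add' hApd hBpd
  have hΓSpd : (Γmat + S).PosDef := posDef_add' hΓpd hS
  have hMunit : IsUnit (Γmat⁻¹ + S⁻¹).det := hMpd.det_pos.ne'.isUnit
  have hΓunit : IsUnit Γmat.det := hΓpd.det_pos.ne'.isUnit
  have hSunit : IsUnit S.det := hS.det_pos.ne'.isUnit
  -- K identity
  have hsum' : Γmat + S = S * (Γmat⁻¹ + S⁻¹) * Γmat := by
    rw [mul_add, Matrix.mul_nonsing_inv S hSunit, Matrix.add_mul, one_mul,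
      mul_assoc S Γmat⁻¹ Γmat, Matrix.nonsing_inv_mul Γmat hΓunit, mul_one, add_comm]
  have cancel1 : ∀ (X Y : Matrix (Fin d) (Fin d) ℝ), IsUnit X.det → X * (X⁻¹ * Y) = Y := by
    intro X Y hX
    rw [← mul_assoc, Matrix.mul_nonsing_inv _ hX, one_mul]
  have hK : Γmat⁻¹ * (Γmat⁻¹ + S⁻¹)⁻¹ * S⁻¹ = (Γmat + S)⁻¹ := by
    symm
    apply Matrix.inv_eq_right_inv
    rw [hsum']
    simp only [mul_assoc]
    rw [cancel1 _ _ hΓunit, cancel1 _ _ hMunit, Matrix.mul_nonsing_inv S hSunit]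
  -- determinant identity
  have hdet : ((Γmat + S) * Γmat⁻¹).det = (Γmat⁻¹ + S⁻¹).det * S.det := by
    have hdi : Γmat⁻¹.det = (Γmat.det)⁻¹ := by
      rw [Matrix.det_nonsing_inv, Ring.inverse_eq_inv']
    rw [Matrix.det_mul, hsum', Matrix.det_mul, Matrix.det_mul, hdi]
    rw [mul_assoc _ Γmat.det, mul_inv_cancel₀ hΓunit.ne_zero]
    ring
  set m : Fin d → ℝ := (ω + ω') / 2 with hmdef
  have hinv : Γmat⁻¹ = Matrix.diagonal fun k => (γ k ^ 2 / 4)⁻¹ := by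
    rw [hΓ]
    apply Matrix.inv_eq_right_inv
    rw [Matrix.diagonal_mul_diagonal]
    have h1 : (fun k => γ k ^ 2 / 4 * (γ k ^ 2 / 4)⁻¹) = fun _ => (1:ℝ) := by
      funext k
      have hγk := (hγ k).ne'
      have hne : γ k ^ 2 / 4 ≠ 0 := by positivity
      field_simp
    rw [h1, Matrix.diagonal_one]
  have hsum_eq : ∀ w : Fin d → ℝ, ∑ k, ((w k - ω k) ^ 2 + (w k - ω' k) ^ 2) / γ k ^ 2
      = (1/2) * ((w - m) ⬝ᵥ Γmat⁻¹ *ᵥ (w - m)) + (1/8) * ((ω - ω') ⬝ᵥ Γmat⁻¹ *ᵥ (ω - ω')) := by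
    intro w
    rw [hinv, hmdef]
    simp only [dotProduct, Matrix.mulVec_diagonal, Pi.sub_apply, Pi.div_apply, Pi.add_apply,
      Pi.ofNat_apply]
    rw [Finset.mul_sum, Finset.mul_sum, ← Finset.sum_add_distrib]
    refine Finset.sum_congr rfl fun k _ => ?_
    have h := (hγ k).ne'
    field_simp
    ring
  set ν : Fin d → ℝ := (Γmat⁻¹ + S⁻¹)⁻¹ *ᵥ (Γmat⁻¹ *ᵥ m + S⁻¹ *ᵥ μ) with hνdef
  have hq : ∀ w : Fin d → ℝ, (w - m) ⬝ᵥ Γmat⁻¹ *ᵥ (w - m) + (w - μ) ⬝ᵥ S⁻¹ *ᵥ (w - μ)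
      = (w - ν) ⬝ᵥ (Γmat⁻¹ + S⁻¹) *ᵥ (w - ν) + (m - μ) ⬝ᵥ (Γmat + S)⁻¹ *ᵥ (m - μ) := by
    intro w
    have h := complete_square Γmat⁻¹ S⁻¹ hAt hBt hMunit m μ w
    rw [hK] at h
    exact h
  have hcomb : ∀ (c x y z u v : ℝ), x + y = z + u + v →
      Real.exp x * (c * Real.exp y) = c * (Real.exp z * Real.exp u) * Real.exp v := by
    intro c x y z u v h
    rw [mul_comm (Real.exp x), mul_assoc, ← Real.exp_add, ← Real.exp_add, mul_assoc,
      ← Real.exp_add, add_comm y x, h]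
  have hpt : ∀ w : Fin d → ℝ,
      Real.exp (-∑ k, ((w k - ω k) ^ 2 + (w k - ω' k) ^ 2) / γ k ^ 2) * mvnPDF μ S w
      = (Real.sqrt ((2 * Real.pi) ^ d * S.det))⁻¹ *
          (Real.exp (-(1/8) * ((ω - ω') ⬝ᵥ Γmat⁻¹ *ᵥ (ω - ω'))) *
           Real.exp (-(1/2) * ((m - μ) ⬝ᵥ (Γmat + S)⁻¹ *ᵥ (m - μ))))
        * Real.exp (-(1/2) * ((w - ν) ⬝ᵥ (Γmat⁻¹ + S⁻¹) *ᵥ (w - ν))) := by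
    intro w
    rw [mvnPDF]
    apply hcomb
    have h1 := hsum_eq w
    have h2 := hq w
    linarith
  calc ∫ w : Fin d → ℝ,
        Real.exp (-∑ k, ((w k - ω k) ^ 2 + (w k - ω' k) ^ 2) / γ k ^ 2) * mvnPDF μ S w
      = ∫ w : Fin d → ℝ, (Real.sqrt ((2 * Real.pi) ^ d * S.det))⁻¹ *
          (Real.exp (-(1/8) * ((ω - ω') ⬝ᵥ Γmat⁻¹ *ᵥ (ω - ω'))) *
           Real.exp (-(1/2) * ((m - μ) ⬝ᵥ (Γmat + S)⁻¹ *ᵥ (m - μ))))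
        * Real.exp (-(1/2) * ((w - ν) ⬝ᵥ (Γmat⁻¹ + S⁻¹) *ᵥ (w - ν))) := by
        congr 1; funext w; exact hpt w
    _ = ((Real.sqrt ((2 * Real.pi) ^ d * S.det))⁻¹ *
          (Real.exp (-(1/8) * ((ω - ω') ⬝ᵥ Γmat⁻¹ *ᵥ (ω - ω'))) *
           Real.exp (-(1/2) * ((m - μ) ⬝ᵥ (Γmat + S)⁻¹ *ᵥ (m - μ)))))
        * ∫ w : Fin d → ℝ, Real.exp (-(1/2) * ((w - ν) ⬝ᵥ (Γmat⁻¹ + S⁻¹) *ᵥ (w - ν))) := by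
        exact MeasureTheory.integral_const_mul _ _
    _ = ((Real.sqrt ((2 * Real.pi) ^ d * S.det))⁻¹ *
          (Real.exp (-(1/8) * ((ω - ω') ⬝ᵥ Γmat⁻¹ *ᵥ (ω - ω'))) *
           Real.exp (-(1/2) * ((m - μ) ⬝ᵥ (Γmat + S)⁻¹ *ᵥ (m - μ)))))
        * ∫ x : Fin d → ℝ, Real.exp (-(1/2) * (x ⬝ᵥ (Γmat⁻¹ + S⁻¹) *ᵥ x)) := by
        congr 1
        exact MeasureTheory.integral_sub_right_eq_self
          (fun x : Fin d → ℝ => Real.exp (-(1/2) * (x ⬝ᵥ (Γmat⁻¹ + S⁻¹) *ᵥ x))) ν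
    _ = ((Real.sqrt ((2 * Real.pi) ^ d * S.det))⁻¹ *
          (Real.exp (-(1/8) * ((ω - ω') ⬝ᵥ Γmat⁻¹ *ᵥ (ω - ω'))) *
           Real.exp (-(1/2) * ((m - μ) ⬝ᵥ (Γmat + S)⁻¹ *ᵥ (m - μ)))))
        * Real.sqrt ((2*π)^d / (Γmat⁻¹ + S⁻¹).det) := by
        rw [integral_exp_neg_half_quadratic _ hMpd]
    _ = (Real.sqrt (((Γmat + S) * Γmat⁻¹).det))⁻¹ *
        Real.exp (-(1 / 8) * ((ω - ω') ⬝ᵥ (Γmat⁻¹ *ᵥ (ω - ω')))) *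
        Real.exp (-(1 / 2) *
          ((m - μ) ⬝ᵥ ((Γmat + S)⁻¹ *ᵥ (m - μ)))) := by
        rw [hdet]
        have hP : (0:ℝ) < (2 * Real.pi) ^ d := by positivity
        have hs : (0:ℝ) < S.det := hS.det_pos
        have ht : (0:ℝ) < (Γmat⁻¹ + S⁻¹).det := hMpd.det_pos
        rw [Real.sqrt_mul hP.le, Real.sqrt_div hP.le, Real.sqrt_mul ht.le]
        have h1 : Real.sqrt ((2 * Real.pi) ^ d) ≠ 0 := by positivity
        have scalar : ∀ (a b c E F : ℝ), a ≠ 0 →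
            (a * b)⁻¹ * (E * F) * (a / c) = (c * b)⁻¹ * E * F := by
          intro a b c E F ha
          rw [mul_inv, mul_inv, div_eq_mul_inv,
            show a⁻¹ * b⁻¹ * (E * F) * (a * c⁻¹) = (a⁻¹ * a) * (b⁻¹ * c⁻¹ * E * F) by ring,
            inv_mul_cancel₀ ha, one_mul]
          ring
        exact scalar _ _ _ _ _ h1
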